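/- Let f : [0,∞) → ℝ be continuous with f(0) = 0, f strictly increasing, and suppose for each R > 0, u_R is a C² solution on [0,1] of u''(s) + (2/s)u'(s) = R² f(u(s)) with u'(0) = 0, u'(1) + βR(u(1) − σ̄) = 0, and 0 ≤ u_R ≤ σ̄ (β, σ̄ > 0 fixed). Then max_{s∈[0,1]} |u_R(s) − σ̄| ≤ (R/(3β)) f(σ̄) + R² f(σ̄) ∫_0^1 τ^{-2} ∫_0^τ l² dl dτ, and consequently u_R → σ̄ uniformly on [0,1] as R → 0⁺. -/

import Mathlib

open Set Filter Topology MeasureTheory intervalIntegral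

/-- uniform estimate and convergence u_R → σ̄ as R → 0⁺. -/
theorem stmt4
    (f : ℝ → ℝ) (hfc : ContinuousOn f (Set.Ici 0)) (hf0 : f 0 = 0)
    (hfmono : StrictMonoOn f (Set.Ici 0))
    (β σb : ℝ) (hβ : 0 < β) (hσb : 0 < σb)
    (u u' u'' : ℝ → ℝ → ℝ)
    (hu : ∀ R > (0:ℝ), ∀ s ∈ Set.Icc (0:ℝ) 1, HasDerivAt (u R) (u' R s) s)
    (hu' : ∀ R > (0:ℝ), ∀ s ∈ Set.Icc (0:ℝ) 1, HasDerivAt (u' R) (u'' R s) s)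
    (hode : ∀ R > (0:ℝ), ∀ s ∈ Set.Ioo (0:ℝ) 1,
      u'' R s + (2 / s) * u' R s = R ^ 2 * f (u R s))
    (hbc0 : ∀ R > (0:ℝ), u' R 0 = 0)
    (hbc1 : ∀ R > (0:ℝ), u' R 1 + β * R * (u R 1 - σb) = 0)
    (hbd : ∀ R > (0:ℝ), ∀ s ∈ Set.Icc (0:ℝ) 1, 0 ≤ u R s ∧ u R s ≤ σb) :
    (∀ R > (0:ℝ), ∀ s ∈ Set.Icc (0:ℝ) 1,
      |u R s - σb| ≤ R / (3 * β) * f σb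
        + R ^ 2 * f σb * ∫ τ in (0:ℝ)..1, (1 / τ ^ 2) * ∫ l in (0:ℝ)..τ, l ^ 2) ∧
    TendstoUniformlyOn (fun R s => u R s) (fun _ => σb)
      (nhdsWithin 0 (Set.Ioi 0)) (Set.Icc 0 1) := by
  have hmono := hfmono.monotoneOn
  have hfσ : 0 ≤ f σb := by
    have := hmono (mem_Ici.2 le_rfl) (mem_Ici.2 hσb.le) hσb.le
    rwa [hf0] at this
  -- value of the double integral
  have Ival : (∫ τ in (0:ℝ)..1, (1/τ^2) * ∫ l in (0:ℝ)..τ, l^2) = 1/6 := by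
    have h : EqOn (fun τ : ℝ => (1/τ^2) * ∫ l in (0:ℝ)..τ, l^2) (fun τ => τ/3)
        (uIcc (0:ℝ) 1) := by
      intro τ _
      simp only [integral_pow]
      rcases eq_or_ne τ 0 with h0 | h0
      · simp [h0]
      · field_simp; ring
    rw [intervalIntegral.integral_congr h]
    simp [intervalIntegral.integral_div, integral_id]
    norm_num
  -- key estimate
  have key : ∀ R, 0 < R → ∀ s ∈ Icc (0:ℝ) 1,
      σb - u R s ≤ R/(3*β)*f σb + R^2 * f σb * (1/6) := by
    intro R hR s hs
    have cu : ContinuousOn (u R) (Icc 0 1) :=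
      fun x hx => ((hu R hR x hx).continuousAt).continuousWithinAt
    have cu' : ContinuousOn (u' R) (Icc 0 1) :=
      fun x hx => ((hu' R hR x hx).continuousAt).continuousWithinAt
    have cfu : ContinuousOn (fun l => f (u R l)) (Icc 0 1) :=
      hfc.comp cu (fun x hx => (hbd R hR x hx).1)
    have hfu_le : ∀ l ∈ Icc (0:ℝ) 1, f (u R l) ≤ f σb := fun l hl =>
      hmono ((hbd R hR l hl).1) (mem_Ici.2 hσb.le) ((hbd R hR l hl).2)
    set g : ℝ → ℝ := fun x => x^2 * u' R x with hgdef
    have hgderiv : ∀ x ∈ Icc (0:ℝ) 1,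
        HasDerivAt g (2*x*u' R x + x^2 * u'' R x) x := by
      intro x hx
      have h1 := (hasDerivAt_pow 2 x).mul (hu' R hR x hx)
      refine h1.congr_deriv ?_
      norm_num
    have hgid : ∀ x ∈ Ioo (0:ℝ) 1,
        2*x*u' R x + x^2*u'' R x = x^2 * (R^2 * f (u R x)) := by
      intro x hx
      have hne : x ≠ 0 := ne_of_gt hx.1
      have h := hode R hR x hx
      have h2 : x^2 * (u'' R x + (2/x) * u' R x) = x^2 * (R^2 * f (u R x)) := by
        rw [h]
      calc 2*x*u' R x + x^2*u'' R x = x^2 * (u'' R x + (2/x) * u' R x) := by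
            field_simp; ring
        _ = x^2 * (R^2 * f (u R x)) := h2
    have hint : ∀ τ ∈ Icc (0:ℝ) 1,
        g τ = ∫ l in (0:ℝ)..τ, l^2 * (R^2 * f (u R l)) := by
      intro τ hτ
      have hsub : Icc (0:ℝ) τ ⊆ Icc 0 1 := Icc_subset_Icc le_rfl hτ.2
      have hcont : ContinuousOn g (Icc 0 τ) :=
        ((continuous_pow 2).continuousOn.mul (cu'.mono hsub))
      have hcd : ∀ x ∈ Ioo (0:ℝ) τ,
          HasDerivWithinAt g (x^2 * (R^2 * f (u R x))) (Ioi x) x := by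
        intro x hx
        have hx1 : x ∈ Ioo (0:ℝ) 1 := ⟨hx.1, lt_of_lt_of_le hx.2 hτ.2⟩
        have hd := hgderiv x (Ioo_subset_Icc_self hx1)
        rw [hgid x hx1] at hd
        exact hd.hasDerivWithinAt
      have hic : IntervalIntegrable (fun l => l^2 * (R^2 * f (u R l))) volume 0 τ := by
        apply ContinuousOn.intervalIntegrable
        rw [uIcc_of_le hτ.1]
        exact (continuous_pow 2).continuousOn.mul (continuousOn_const.mul (cfu.mono hsub))
      have hFTC := intervalIntegral.integral_eq_sub_of_hasDeriv_right_of_le hτ.1 hcont hcd hic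
      have hg0 : g 0 = 0 := by simp [hgdef]
      rw [hg0] at hFTC
      linarith
    have hgbound : ∀ τ ∈ Icc (0:ℝ) 1, g τ ≤ R^2 * f σb * τ^3 / 3 := by
      intro τ hτ
      have hsub : Icc (0:ℝ) τ ⊆ Icc 0 1 := Icc_subset_Icc le_rfl hτ.2
      rw [hint τ hτ]
      have hic : IntervalIntegrable (fun l => l^2 * (R^2 * f (u R l))) volume 0 τ := by
        apply ContinuousOn.intervalIntegrable
        rw [uIcc_of_le hτ.1]
        exact (continuous_pow 2).continuousOn.mul (continuousOn_const.mul (cfu.mono hsub))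
      have hic2 : IntervalIntegrable (fun l : ℝ => l^2 * (R^2 * f σb)) volume 0 τ :=
        ((continuous_pow 2).mul continuous_const).intervalIntegrable _ _
      have h1 : (∫ l in (0:ℝ)..τ, l^2 * (R^2 * f (u R l)))
          ≤ ∫ l in (0:ℝ)..τ, l^2 * (R^2 * f σb) := by
        apply intervalIntegral.integral_mono_on hτ.1 hic hic2
        intro l hl
        have hle := hfu_le l (hsub hl)
        exact mul_le_mul_of_nonneg_left
          (mul_le_mul_of_nonneg_left hle (sq_nonneg R)) (sq_nonneg l)
      have h2 : (∫ l in (0:ℝ)..τ, l^2 * (R^2 * f σb)) = R^2 * f σb * τ^3 / 3 := by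
        rw [intervalIntegral.integral_mul_const, integral_pow]
        norm_num
        ring
      linarith
    have hu'bound : ∀ τ ∈ Icc (0:ℝ) 1, u' R τ ≤ R^2 * f σb * τ / 3 := by
      intro τ hτ
      rcases eq_or_lt_of_le hτ.1 with h0 | h0
      · rw [← h0, hbc0 R hR]
        nlinarith [sq_nonneg R]
      · have hb := hgbound τ hτ
        have hgτ : τ^2 * u' R τ ≤ R^2 * f σb * τ^3 / 3 := hb
        nlinarith [mul_pos h0 h0]
    have hu'1 : u' R 1 ≤ R^2 * f σb / 3 := by
      have := hu'bound 1 ⟨by norm_num, le_rfl⟩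
      linarith
    have hβR : (0:ℝ) < β * R := mul_pos hβ hR
    have h1 : σb - u R 1 = u' R 1 / (β * R) := by
      have h := hbc1 R hR
      field_simp
      linear_combination -h
    have h1b : σb - u R 1 ≤ R/(3*β)*f σb := by
      rw [h1, div_le_iff₀ hβR]
      have he : R/(3*β)*f σb * (β*R) = R^2 * f σb / 3 := by
        field_simp
      rw [he]
      exact hu'1
    have hsub : Icc s 1 ⊆ Icc (0:ℝ) 1 := Icc_subset_Icc hs.1 le_rfl
    have h2 : u R 1 - u R s = ∫ τ in s..(1:ℝ), u' R τ := by
      symm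
      apply intervalIntegral.integral_eq_sub_of_hasDerivAt
      · intro x hx
        rw [uIcc_of_le hs.2] at hx
        exact hu R hR x (hsub hx)
      · apply ContinuousOn.intervalIntegrable
        rw [uIcc_of_le hs.2]
        exact cu'.mono hsub
    have h3 : (∫ τ in s..(1:ℝ), u' R τ) ≤ ∫ τ in s..(1:ℝ), R^2 * f σb * τ / 3 := by
      apply intervalIntegral.integral_mono_on hs.2
      · apply ContinuousOn.intervalIntegrable
        rw [uIcc_of_le hs.2]
        exact cu'.mono hsub
      · exact ((continuous_const.mul continuous_id).div_const 3).intervalIntegrable _ _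
      · intro τ hτ
        exact hu'bound τ (hsub hτ)
    have h4 : (∫ τ in s..(1:ℝ), R^2 * f σb * τ / 3) ≤ R^2 * f σb * (1/6) := by
      have he : (∫ τ in s..(1:ℝ), R^2 * f σb * τ / 3)
          = R^2 * f σb / 3 * ((1 - s^2)/2) := by
        rw [show (fun τ : ℝ => R^2 * f σb * τ / 3) = fun τ : ℝ => (R^2 * f σb / 3) * τ
          from by funext τ; ring]
        rw [intervalIntegral.integral_const_mul, integral_id]
        ring
      rw [he]
      nlinarith [mul_nonneg (mul_nonneg (sq_nonneg R) hfσ) (sq_nonneg s)]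
    linarith
  constructor
  · intro R hR s hs
    rw [Ival]
    have h := key R hR s hs
    have hub := (hbd R hR s hs).2
    rw [abs_sub_comm, abs_of_nonneg (sub_nonneg.2 hub)]
    linarith
  · rw [Metric.tendstoUniformlyOn_iff]
    intro ε hε
    have hC : Tendsto (fun R : ℝ => R/(3*β)*f σb + R^2*f σb*(1/6)) (𝓝[>] (0:ℝ)) (𝓝 0) := by
      have hc : Continuous (fun R : ℝ => R/(3*β)*f σb + R^2*f σb*(1/6)) := by
        apply Continuous.add
        · exact (continuous_id.div_const _).mul continuous_const
        · exact (((continuous_pow 2).mul continuous_const).mul continuous_const)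
      have ht := hc.tendsto 0
      have h0 : (0:ℝ)/(3*β)*f σb + (0:ℝ)^2*f σb*(1/6) = 0 := by ring
      rw [h0] at ht
      exact ht.mono_left nhdsWithin_le_nhds
    filter_upwards [hC.eventually_lt_const hε, self_mem_nhdsWithin] with R hRc hRpos s hs
    have hRpos' : (0:ℝ) < R := hRpos
    have h := key R hRpos' s hs
    have hub := (hbd R hRpos' s hs).2
    rw [Real.dist_eq, abs_of_nonneg (sub_nonneg.2 hub)]
    linarith
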